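/- arXiv:1704.00701 — 4 statements merged into one kernel-verified Lean document; each statement's English description precedes it below -/
import Mathlib

section
/- Each operator 𝔗_i satisfies the quadratic relation 𝔗_i² = (v−1)·𝔗_i + v·id on 𝔐. (Theorem 1.1, quadratic relation, of 'Hecke Modules from Metaplectic Ice'.) -/
/-!
Theorem 1.1 (quadratic relation) of "Hecke Modules from Metaplectic Ice".

Setting: `Λ` is a free abelian group of finite rank containing a reduced crystallographic
root system `Φ` (the `Φ∨` of the paper) with Weyl group `W` generated by simple reflections
`s i` (acting on `Λ` through `σ`), simple coroots `α i`, and `z : T̂(ℂ) = Hom(Λ, ℂˣ)`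
regular.  Given vector spaces `M w` (`w ∈ W`) and linear maps `A_i^w : M w → M (s i * w)`
satisfying assumptions (a) and (b), the operators `𝔗_i` on `𝔐 = ⊕_w M w` satisfy the
quadratic relation `𝔗_i² = (v−1)𝔗_i + v`.

The family of maps is encoded as `A i w : M (s i * w) →ₗ[ℂ] M w`, i.e. `A i w` is the map
`A_i^{s_i w}` of the paper (an equivalent parametrization, since `s i` is an involution),
which avoids dependent-type casts.  The operator `heckeA s M A i` of the total space
`𝔐 = Π w, M w` is then `(φ_w) ↦ (A_i^{s_i w} φ_{s_i w})`, and `heckeT` is `𝔗_i`.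
-/

noncomputable section

/-- The multiplicative group structure on `A ≃+ A` (composition), which the older Mathlib
provided through `AddAut A`; `AddAut` is now an additive group. -/
instance addEquivSelfGroupOld (A : Type*) [Add A] : Group (A ≃+ A) where
  mul g h := AddEquiv.trans h g
  one := AddEquiv.refl _
  inv := AddEquiv.symm
  mul_assoc _ _ _ := rfl
  one_mul _ := rfl
  mul_one _ := rfl
  inv_mul_cancel := AddEquiv.self_trans_symm

/-- Alternating composite: `altComp f g m = ⋯ ∘ g ∘ f` with `m` factors, rightmost `f`. -/
def altComp {E : Type*} [AddCommGroup E] [Module ℂ E] (f g : E →ₗ[ℂ] E) : ℕ → (E →ₗ[ℂ] E)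
  | 0 => LinearMap.id
  | m + 1 => altComp g f m ∘ₗ f

/-- The "intertwining" part of the Hecke operator: `(φ_w)_w ↦ (A_i^{s_i w} φ_{s_i w})_w`. -/
def heckeA {W : Type*} [Group W] {r : ℕ} (s : Fin r → W)
    (M : W → Type*) [∀ w, AddCommGroup (M w)] [∀ w, Module ℂ (M w)]
    (A : ∀ (i : Fin r) (w : W), M (s i * w) →ₗ[ℂ] M w) (i : Fin r) :
    (∀ w, M w) →ₗ[ℂ] ∀ w, M w where
  toFun φ w := A i w (φ (s i * w))
  map_add' φ ψ := by funext w; simp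
  map_smul' c φ := by funext w; simp

/-- The diagonal operator multiplying the `w`-component by the scalar `c w`. -/
def diagOp {W : Type*} (M : W → Type*) [∀ w, AddCommGroup (M w)] [∀ w, Module ℂ (M w)]
    (c : W → ℂ) : (∀ w, M w) →ₗ[ℂ] ∀ w, M w where
  toFun φ w := c w • φ w
  map_add' φ ψ := by funext w; simp
  map_smul' t φ := by
    funext w
    simp only [Pi.smul_apply, RingHom.id_apply]
    exact smul_comm _ _ _

/-- The Hecke operator `𝔗_i` on `𝔐 = Π w, M w`:
`(𝔗_i φ)_w = ((1−v)(wz)^{α_i} / (1 − (wz)^{α_i})) φ_w + A_i^{s_i w} (φ_{s_i w})`,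
where `(wz)^μ = z(w⁻¹ μ)`. -/
def heckeT {Λ W : Type*} [AddCommGroup Λ] [Group W] {r : ℕ}
    (σ : W →* Λ ≃+ Λ) (s : Fin r → W) (α : Fin r → Λ) (z : Λ → ℂ) (v : ℂ)
    (M : W → Type*) [∀ w, AddCommGroup (M w)] [∀ w, Module ℂ (M w)]
    (A : ∀ (i : Fin r) (w : W), M (s i * w) →ₗ[ℂ] M w) (i : Fin r) :
    (∀ w, M w) →ₗ[ℂ] ∀ w, M w :=
  diagOp M (fun w => ((1 - v) * z (σ w⁻¹ (α i))) / (1 - z (σ w⁻¹ (α i)))) + heckeA s M A i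

/-- **Theorem 1.1 of "Hecke Modules from Metaplectic Ice" (quadratic relation).**
Under Assumptions 1.1 of the paper, each `𝔗_i` satisfies `𝔗_i² = (v−1)𝔗_i + v`. -/
theorem heckeT_quadratic
    -- Λ: free abelian group of finite rank
    {Λ : Type*} [AddCommGroup Λ] [Module.Free ℤ Λ] [Module.Finite ℤ Λ]
    -- W: finite Weyl group acting on Λ
    {W : Type*} [Group W] [Fintype W] {r : ℕ}
    (σ : W →* Λ ≃+ Λ) (s : Fin r → W) (α : Fin r → Λ) (pair : Fin r → Λ →+ ℤ)
    -- Φ: reduced crystallographic root system inside Λ, stable under W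
    (Φ : Set Λ) (hΦfin : Φ.Finite) (hΦneg : ∀ μ ∈ Φ, -μ ∈ Φ)
    (hΦW : ∀ (w : W), ∀ μ ∈ Φ, σ w μ ∈ Φ)
    (hΦred : ∀ μ ∈ Φ, (2 : ℤ) • μ ∉ Φ)
    (hα : ∀ i, α i ∈ Φ) (hpair : ∀ i, pair i (α i) = 2)
    (hrefl : ∀ (i : Fin r) (μ : Λ), σ (s i) μ = μ - pair i μ • α i)
    (hs2 : ∀ i, s i * s i = 1)
    (hgen : Subgroup.closure (Set.range s) = ⊤)
    -- z : a regular element of T̂(ℂ) = Hom(Λ, ℂˣ)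
    (z : Λ → ℂ) (hz0 : z 0 = 1) (hzadd : ∀ μ ν, z (μ + ν) = z μ * z ν)
    (hzne : ∀ μ, z μ ≠ 0) (hzreg : ∀ μ ∈ Φ, z μ ≠ 1)
    (v : ℂ)
    -- the data of Assumptions 1.1
    (M : W → Type*) [∀ w, AddCommGroup (M w)] [∀ w, Module ℂ (M w)]
    (A : ∀ (i : Fin r) (w : W), M (s i * w) →ₗ[ℂ] M w)
    -- (a): A_i^{s_i w} ∘ A_i^w is the scalar (6) of the paper
    (ha : ∀ (i : Fin r) (w : W) (φ : ∀ u, M u),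
      heckeA s M A i (heckeA s M A i φ) w =
        (((1 - v * z (σ w⁻¹ (α i))) * (1 - v * z (σ w⁻¹ (-α i)))) /
          ((1 - z (σ w⁻¹ (α i))) * (1 - z (σ w⁻¹ (-α i))))) • φ w)
    -- (b): the braid relations (7) of the paper
    (hbraid : ∀ i j : Fin r, i ≠ j →
      altComp (heckeA s M A i) (heckeA s M A j) (orderOf (s i * s j)) =
        altComp (heckeA s M A j) (heckeA s M A i) (orderOf (s i * s j))) :
    ∀ i : Fin r,
      heckeT σ s α z v M A i ∘ₗ heckeT σ s α z v M A i =
        (v - 1) • heckeT σ s α z v M A i + v • LinearMap.id := by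
  intro i
  refine LinearMap.ext fun φ => funext fun w => ?_
  -- notation
  set x : ℂ := z (σ w⁻¹ (α i)) with hxdef
  set y : ℂ := z (σ w⁻¹ (-α i)) with hydef
  have hx0 : x ≠ 0 := hzne _
  have hx1 : (1 : ℂ) - x ≠ 0 := sub_ne_zero_of_ne (Ne.symm (hzreg _ (hΦW w⁻¹ _ (hα i))))
  have hy1 : (1 : ℂ) - y ≠ 0 :=
    sub_ne_zero_of_ne (Ne.symm (hzreg _ (hΦW w⁻¹ _ (hΦneg _ (hα i)))))
  have hxy : x * y = 1 := by
    rw [hxdef, hydef, map_neg, ← hzadd, add_neg_cancel, hz0]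
  have hy : y = x⁻¹ := eq_inv_of_mul_eq_one_left (by rw [mul_comm]; exact hxy)
  have hsinv : (s i)⁻¹ = s i := inv_eq_of_mul_eq_one_right (hs2 i)
  have hsiα : σ (s i) (α i) = -α i := by
    rw [hrefl, hpair, two_zsmul]; abel
  have hsw : z (σ (s i * w)⁻¹ (α i)) = y := by
    rw [mul_inv_rev, hsinv, map_mul]
    show z (σ w⁻¹ (σ (s i) (α i))) = y
    rw [hsiα, hydef]
  -- the scalar Q of assumption (a)
  have haa := ha i w φ
  simp only [heckeA, LinearMap.coe_mk, AddHom.coe_mk, ← hxdef, ← hydef] at haa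
  -- unfold everything
  simp only [LinearMap.comp_apply, LinearMap.add_apply, LinearMap.smul_apply,
    LinearMap.id_apply, heckeT, diagOp, heckeA, LinearMap.coe_mk, AddHom.coe_mk,
    Pi.add_apply, Pi.smul_apply, hsw, ← hxdef, ← hydef, map_add, map_smul,
    smul_add, smul_smul]
  rw [haa]
  have hx1' : x - 1 ≠ 0 := fun h => hx1 (by linear_combination -h)
  match_scalars <;>
    (rw [hy] at *; field_simp [hx0, hx1, hx1']; ring)
end
end

section
/- For each i, as ℂ-linear operators on K: s_i ∘ (1 + 𝒯_i) = m_i ∘ (1 + 𝒯_i), where s_i denotes the action f ↦ s_i·f and m_i is multiplication by (1 − v z^{α_i∨})/(1 − v z^{−α_i∨}). (The identity (dtranspro) established in the proof of Theorem 2.6 of 'Hecke Modules from Metaplectic Ice'.) -/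
/-!
The identity (dtranspro) from the proof of Theorem 2.6 of
"Hecke Modules from Metaplectic Ice": `s_i ∘ (1 + 𝒯_i) = m_i ∘ (1 + 𝒯_i)` where `𝒯_i` is
the conjugated Demazure–Whittaker operator and `m_i` is multiplication by
`(1 − v z^{α_i∨})/(1 − v z^{−α_i∨})`.
-/

noncomputable section

/-- The conjugated Demazure–Whittaker operator
`𝒯_i f = ((1−v)/(z^{α_i}−1))·f + ((v z^{−α_i}−1)/(z^{α_i}−1))·(s_i·f)`. -/
def demWhitC {Λ W K : Type*} [AddCommGroup Λ] [Group W] [Field K] [Algebra ℂ K]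
    {r : ℕ} (ζ : Λ → K) (τ : W →* (K ≃ₐ[ℂ] K)) (s : Fin r → W) (α : Fin r → Λ)
    (v : ℂ) (i : Fin r) : K →ₗ[ℂ] K where
  toFun f := ((1 - algebraMap ℂ K v) / (ζ (α i) - 1)) * f
      + ((algebraMap ℂ K v * ζ (-α i) - 1) / (ζ (α i) - 1)) * τ (s i) f
  map_add' f g := by simp only [map_add]; ring
  map_smul' c f := by
    simp only [Algebra.smul_def, map_mul, AlgEquiv.commutes, RingHom.id_apply]
    ring

/-- **Identity (dtranspro) in the proof of Theorem 2.6 of "Hecke Modules from Metaplectic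
Ice".**  As `ℂ`-linear operators on `K`: `s_i ∘ (1 + 𝒯_i) = m_i ∘ (1 + 𝒯_i)`, where `s_i`
acts through `τ` and `m_i` is multiplication by `(1 − v z^{α_i∨})/(1 − v z^{−α_i∨})`. -/
theorem demWhitC_reflection_identity
    -- Λ: free abelian group of finite rank
    {Λ : Type*} [AddCommGroup Λ] [Module.Free ℤ Λ] [Module.Finite ℤ Λ]
    -- W: finite Weyl group acting on Λ
    {W : Type*} [Group W] [Fintype W] {r : ℕ}
    (σ : W →* Multiplicative (AddAut Λ)) (s : Fin r → W) (α : Fin r → Λ) (pair : Fin r → Λ →+ ℤ)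
    -- Φ: the reduced crystallographic root system inside Λ
    (Φ : Set Λ) (hΦfin : Φ.Finite) (hΦneg : ∀ μ ∈ Φ, -μ ∈ Φ)
    (hΦW : ∀ (w : W), ∀ μ ∈ Φ, σ w μ ∈ Φ)
    (hΦred : ∀ μ ∈ Φ, (2 : ℤ) • μ ∉ Φ)
    (hα : ∀ i, α i ∈ Φ) (hpair : ∀ i, pair i (α i) = 2)
    (hrefl : ∀ (i : Fin r) (μ : Λ), σ (s i) μ = μ - pair i μ • α i)
    (hs2 : ∀ i, s i * s i = 1)
    (hgen : Subgroup.closure (Set.range s) = ⊤)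
    -- K ⊇ ℂ[Λ]: the fraction field, with basis elements ζ λ = z^λ
    {K : Type*} [Field K] [Algebra ℂ K]
    (ζ : Λ → K) (hζ0 : ζ 0 = 1) (hζadd : ∀ μ ν, ζ (μ + ν) = ζ μ * ζ ν)
    (hζindep : LinearIndependent ℂ ζ)
    -- the W-action on K by ℂ-algebra automorphisms, with w·z^λ = z^{wλ}
    (τ : W →* (K ≃ₐ[ℂ] K)) (hτ : ∀ (w : W) (μ : Λ), τ w (ζ μ) = ζ (σ w μ))
    (v : ℂ) :
    ∀ (i : Fin r) (f : K),
      τ (s i) (f + demWhitC ζ τ s α v i f) =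
        ((1 - algebraMap ℂ K v * ζ (α i)) / (1 - algebraMap ℂ K v * ζ (-α i))) *
          (f + demWhitC ζ τ s α v i f) := by
  intro i f
  have hα0 : α i ≠ 0 := by
    intro h
    have h2 := hpair i
    rw [h, map_zero] at h2
    exact two_ne_zero h2.symm
  have key : ∀ (c : ℂ) (μ ν : Λ), μ ≠ ν → algebraMap ℂ K c * ζ μ ≠ ζ ν := by
    intro c μ ν hμν h
    have hl : Finsupp.linearCombination ℂ ζ (Finsupp.single μ c - Finsupp.single ν 1) = 0 := by
      simp [Finsupp.linearCombination_single, Algebra.smul_def, h]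
    have := linearIndependent_iff.mp hζindep _ hl
    have h2 := DFunLike.congr_fun this ν
    rw [Finsupp.sub_apply, Finsupp.single_eq_of_ne' hμν, Finsupp.single_eq_same,
      Finsupp.zero_apply] at h2
    simp at h2
  have hab : ζ (α i) * ζ (-α i) = 1 := by
    rw [← hζadd, add_neg_cancel, hζ0]
  have ha0 : ζ (α i) ≠ 0 := left_ne_zero_of_mul_eq_one hab
  have hb : ζ (-α i) = (ζ (α i))⁻¹ := eq_inv_of_mul_eq_one_right hab
  have ha1 : ζ (α i) - 1 ≠ 0 := by
    rw [sub_ne_zero, ← hζ0]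
    exact fun h => hα0 (hζindep.injective h)
  have hb1 : (ζ (α i))⁻¹ - 1 ≠ 0 := by
    rw [← hb, sub_ne_zero, ← hζ0]
    exact fun h => hα0 (neg_eq_zero.mp (hζindep.injective h))
  have hvb : 1 - algebraMap ℂ K v * (ζ (α i))⁻¹ ≠ 0 := by
    rw [← hb, sub_ne_zero]
    intro h
    exact key v (-α i) 0 (neg_ne_zero.mpr hα0) (by rw [hζ0]; exact h.symm)
  have hτa : τ (s i) (ζ (α i)) = (ζ (α i))⁻¹ := by
    rw [hτ, hrefl, hpair, ← hb]
    congr 1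
    abel
  have hτb : τ (s i) ((ζ (α i))⁻¹) = ζ (α i) := by
    rw [← hb, hτ, hrefl, map_neg, hpair]
    congr 1
    abel
  have hτf : τ (s i) (τ (s i) f) = f := by
    have h1 : τ (s i) * τ (s i) = 1 := by rw [← map_mul, hs2, map_one]
    have h2 := congrArg (fun e : K ≃ₐ[ℂ] K => e f) h1
    simpa using h2
  simp only [demWhitC, LinearMap.coe_mk, AddHom.coe_mk, map_add, map_mul, map_div₀,
    map_one, map_sub, AlgEquiv.commutes, hτa, hτb, hτf, hb]
  have hav : ζ (α i) - algebraMap ℂ K v ≠ 0 := by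
    rw [sub_ne_zero]
    intro h
    exact key v 0 (α i) (Ne.symm hα0) (by rw [hζ0, mul_one, h])
  have h1a : (1 : K) - ζ (α i) ≠ 0 := fun h => ha1 (by rw [← neg_sub (ζ (α i)) 1, neg_eq_zero] at h; exact h)
  field_simp
  ring
end
end

section
/- For each simple reflection s_i, as ℂ-linear operators on K: s_i ∘ ℐ° = m_i ∘ ℐ°, where m_i is multiplication by (1 − v z^{α_i∨})/(1 − v z^{−α_i∨}). Consequently the operator ∏_{α∨∈Φ∨₊}(1 − v z^{−α∨})^{−1} · ℐ° commutes with the W-action: w ∘ (∏_{α∨>0}(1 − v z^{−α∨})^{−1} ℐ°) = (∏_{α∨>0}(1 − v z^{−α∨})^{−1} ℐ°) for all w ∈ W. (The identities (gamtranspro) and (gamprewinv) established in the proof of Theorem 2.6 of 'Hecke Modules from Metaplectic Ice'.) -/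
/-!
The identities (gamtranspro) and (gamprewinv) from the proof of Theorem 2.6 of
"Hecke Modules from Metaplectic Ice".
-/

noncomputable section

theorem coreId' {K : Type*} [Field K] (x y V g G : K) (hxy : x * y = 1) (hx1 : x - 1 ≠ 0)
    (hy1 : y - 1 ≠ 0) (hvy : 1 - V * y ≠ 0) :
    (1 + (1 - V)/(y - 1)) * G + ((V * x - 1)/(y - 1)) * g
      = ((1 - V*x)/(1 - V*y)) * ((1 + (1 - V)/(x - 1)) * g + ((V * y - 1)/(x - 1)) * G) := by
  have hx0 : x ≠ 0 := fun h => by simp [h] at hxy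
  have hy : y = x⁻¹ := by field_simp; linear_combination hxy
  subst hy
  have h1x : 1 - x ≠ 0 := fun h => hx1 (by linear_combination -h)
  have h2 : x - V ≠ 0 := by
    intro h
    rw [sub_eq_zero] at h
    exact hvy (by rw [← h, mul_inv_cancel₀ hx0, sub_self])
  field_simp
  ring

theorem flipCard' {Λ : Type*} [AddCommGroup Λ] [DecidableEq Λ] (Φp : Finset Λ)
    (g : Λ → Λ) (α : Λ) (hα : α ∈ Φp) (hnα : -α ∉ Φp)
    (hgg : ∀ x, g (g x) = x) (hgα : g α = -α)
    (hperm : ∀ β ∈ Φp, β ≠ α → g β ∈ Φp)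
    (p q : Λ → Prop) [DecidablePred p] [DecidablePred q]
    (hq : ∀ β, q β ↔ p (g β)) (hpα : p (g α) ↔ ¬ p α) :
    (Φp.filter q).card + (Φp.filter p).card
      = 2 * ((Φp.erase α).filter p).card + 1 := by
  have hgmem : ∀ β ∈ Φp.erase α, g β ∈ Φp.erase α := by
    intro β hβ
    rw [Finset.mem_erase] at hβ ⊢
    refine ⟨fun h => hnα ?_, hperm β hβ.2 hβ.1⟩
    have hb : β = -α := by rw [← hgg β, h, hgα]
    rw [hb] at hβ
    exact hβ.2
  have hbij : ((Φp.erase α).filter q).card = ((Φp.erase α).filter p).card := by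
    apply Finset.card_nbij' g g
    · intro a ha
      rw [Finset.mem_coe, Finset.mem_filter] at ha ⊢
      exact ⟨hgmem a ha.1, (hq a).mp ha.2⟩
    · intro a ha
      rw [Finset.mem_coe, Finset.mem_filter] at ha ⊢
      refine ⟨hgmem a ha.1, ?_⟩
      rw [hq, hgg]
      exact ha.2
    · intro a _; exact hgg a
    · intro a _; exact hgg a
  have key : ∀ (u : Λ → Prop) (_ : DecidablePred u),
      (Φp.filter u).card = ((Φp.erase α).filter u).card + (if u α then 1 else 0) := by
    intro u _
    conv_lhs => rw [← Finset.insert_erase hα, Finset.filter_insert]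
    by_cases h : u α
    · rw [if_pos h, if_pos h, Finset.card_insert_of_notMem
        (fun hc => Finset.notMem_erase α Φp (Finset.mem_filter.1 hc).1)]
    · rw [if_neg h, if_neg h, add_zero]
  have k1 := key q inferInstance
  have k2 := key p inferInstance
  by_cases h : p α
  · rw [if_pos h] at k2
    rw [if_neg (fun hc => (hpα.mp ((hq α).mp hc)) h)] at k1
    omega
  · rw [if_neg h] at k2
    rw [if_pos ((hq α).mpr (hpα.mpr h))] at k1
    omega

theorem revWord' {W : Type*} [Group W] {r : ℕ} (s : Fin r → W)
    (hs2 : ∀ i, s i * s i = 1) :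
    ∀ l : List (Fin r), ((l.reverse.map s).prod) = ((l.map s).prod)⁻¹ := by
  intro l
  induction l with
  | nil => simp
  | cons i l ih =>
      rw [List.reverse_cons, List.map_append, List.prod_append]
      simp only [List.map_cons, List.map_nil, List.prod_cons, List.prod_nil, mul_one]
      rw [ih, mul_inv_rev]
      congr 1
      exact (inv_eq_of_mul_eq_one_left (hs2 i)).symm


/-- **Identities (gamtranspro) and (gamprewinv) in the proof of Theorem 2.6 of "Hecke
Modules from Metaplectic Ice".**  With `𝒯_w` the product of the `𝒯_i` over a reduced word
for `w` and `ℐ° = Σ_{w∈W} 𝒯_w`: first, `s_i ∘ ℐ° = m_i ∘ ℐ°` where `m_i` is multiplication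
by `(1 − v z^{α_i∨})/(1 − v z^{−α_i∨})`; consequently the normalized operator
`∏_{α∨∈Φ∨₊}(1 − v z^{−α∨})⁻¹ · ℐ°` commutes with the `W`-action. -/
theorem sphericalIdempotent_W_equivariance
    -- Λ: free abelian group of finite rank
    {Λ : Type*} [AddCommGroup Λ] [Module.Free ℤ Λ] [Module.Finite ℤ Λ]
    -- W: finite Weyl group acting on Λ
    {W : Type*} [Group W] [Fintype W] {r : ℕ}
    (σ : W →* Multiplicative (AddAut Λ)) (s : Fin r → W) (α : Fin r → Λ) (pair : Fin r → Λ →+ ℤ)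
    -- Φ: the reduced crystallographic root system inside Λ
    (Φ : Set Λ) (hΦfin : Φ.Finite) (hΦneg : ∀ μ ∈ Φ, -μ ∈ Φ)
    (hΦW : ∀ (w : W), ∀ μ ∈ Φ, Multiplicative.toAdd (σ w) μ ∈ Φ)
    (hΦred : ∀ μ ∈ Φ, (2 : ℤ) • μ ∉ Φ)
    (hα : ∀ i, α i ∈ Φ) (hpair : ∀ i, pair i (α i) = 2)
    (hrefl : ∀ (i : Fin r) (μ : Λ), Multiplicative.toAdd (σ (s i)) μ = μ - pair i μ • α i)
    (hs2 : ∀ i, s i * s i = 1)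
    (hgen : Subgroup.closure (Set.range s) = ⊤)
    -- K ⊇ ℂ[Λ]: the fraction field, with basis elements ζ λ = z^λ
    {K : Type*} [Field K] [Algebra ℂ K]
    (ζ : Λ → K) (hζ0 : ζ 0 = 1) (hζadd : ∀ μ ν, ζ (μ + ν) = ζ μ * ζ ν)
    (hζindep : LinearIndependent ℂ ζ)
    -- the W-action on K by ℂ-algebra automorphisms, with w·z^λ = z^{wλ}
    (τ : W →* (K ≃ₐ[ℂ] K)) (hτ : ∀ (w : W) (μ : Λ), τ w (ζ μ) = ζ (Multiplicative.toAdd (σ w) μ))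
    (v : ℂ)
    -- the fixed choice of positive roots Φ∨₊
    (Φp : Finset Λ) (hΦp : ∀ μ, μ ∈ Φ ↔ (μ ∈ Φp ∨ -μ ∈ Φp))
    (hΦpdisj : ∀ μ ∈ Φp, -μ ∉ Φp) (hαp : ∀ i, α i ∈ Φp)
    (hperm : ∀ (i : Fin r), ∀ β ∈ Φp, β ≠ α i → Multiplicative.toAdd (σ (s i)) β ∈ Φp)
    -- 𝒯_w, well defined via any reduced word for w (the 𝒯_i satisfy the braid relations)
    (Tw : W → Module.End ℂ K)
    (hTw : ∀ (w : W) (l : List (Fin r)), (l.map s).prod = w →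
      (∀ l' : List (Fin r), (l'.map s).prod = w → l.length ≤ l'.length) →
      Tw w = (l.map (fun i => demWhitC ζ τ s α v i)).prod) :
    -- (gamtranspro): s_i ∘ ℐ° = m_i ∘ ℐ°
    (∀ (i : Fin r) (f : K),
        τ (s i) ((∑ w : W, Tw w) f) =
          ((1 - algebraMap ℂ K v * ζ (α i)) / (1 - algebraMap ℂ K v * ζ (-α i))) *
            ((∑ w : W, Tw w) f))
    -- (gamprewinv): ∏_{α∨>0}(1 − v z^{−α∨})⁻¹ · ℐ° commutes with the W-action
    ∧ (∀ (w : W) (f : K),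
        τ w ((∏ β ∈ Φp, (1 - algebraMap ℂ K v * ζ (-β)))⁻¹ * ((∑ u : W, Tw u) f)) =
          (∏ β ∈ Φp, (1 - algebraMap ℂ K v * ζ (-β)))⁻¹ * ((∑ u : W, Tw u) f)) := by
  
  obtain ⟨σ, hσ⟩ : ∃ σ' : W →* (Λ ≃ₗ[ℤ] Λ), ∀ w μ, σ' w μ = Multiplicative.toAdd (σ w) μ :=
    ⟨{ toFun := fun w => (Multiplicative.toAdd (σ w)).toIntLinearEquiv
       map_one' := LinearEquiv.ext fun μ => by rw [map_one]; rfl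
       map_mul' := fun x y => LinearEquiv.ext fun μ => by rw [map_mul]; rfl }, fun _ _ => rfl⟩
  simp only [← hσ] at hΦW hrefl hτ hperm
  classical
  set V : K := algebraMap ℂ K v with hV
  -- basic facts about ζ
  have hζinj : Function.Injective ζ := hζindep.injective
  have hζne1 : ∀ μ : Λ, μ ≠ 0 → ζ μ - 1 ≠ 0 := by
    intro μ hμ h
    rw [sub_eq_zero, ← hζ0] at h
    exact hμ (hζinj h)
  have hunit : ∀ μ : Λ, μ ≠ 0 → 1 - V * ζ μ ≠ 0 := by
    intro μ hμ h
    have hli := linearIndependent_iff'.mp hζindep {0, μ}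
      (fun ν => if ν = 0 then (1 : ℂ) else -v) ?_ 0 (by simp)
    · simp at hli
    · rw [Finset.sum_pair (fun hc => hμ hc.symm)]
      simp only [if_pos, if_neg hμ, one_smul, hζ0, Algebra.smul_def, map_neg, map_one, ← hV]
      linear_combination h
  -- basic facts about α, σ, τ
  have hα0 : ∀ i, α i ≠ 0 := by
    intro i h
    have h2 := hpair i
    rw [h, map_zero] at h2
    exact absurd h2 (by norm_num)
  have hσα : ∀ i, σ (s i) (α i) = -(α i) := by
    intro i
    rw [hrefl i (α i), hpair i, two_zsmul]
    abel
  have hσσ : ∀ (i : Fin r) (μ : Λ), σ (s i) (σ (s i) μ) = μ := by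
    intro i μ
    have h : σ (s i) * σ (s i) = 1 := by rw [← map_mul, hs2 i, map_one]
    have h3 : σ (s i) (σ (s i) μ) = (σ (s i) * σ (s i)) μ := rfl
    rw [h3, h]
    rfl
  have hσmul : ∀ (u w : W) (μ : Λ), σ (u * w) μ = σ u (σ w μ) := by
    intro u w μ
    rw [map_mul]
    rfl
  have hττ : ∀ (i : Fin r) (z : K), τ (s i) (τ (s i) z) = z := by
    intro i z
    have h : τ (s i) * τ (s i) = 1 := by rw [← map_mul, hs2 i, map_one]
    have h3 : τ (s i) (τ (s i) z) = (τ (s i) * τ (s i)) z := rfl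
    rw [h3, h]
    rfl
  have hΦpΦ : ∀ β ∈ Φp, β ∈ Φ := fun β hβ => (hΦp β).mpr (Or.inl hβ)
  have hexcl : ∀ μ ∈ Φ, (μ ∈ Φp ↔ ¬(-μ ∈ Φp)) := by
    intro μ hμ
    constructor
    · intro h hn; exact hΦpdisj μ h hn
    · intro h
      rcases (hΦp μ).mp hμ with h1 | h1
      · exact h1
      · exact absurd h1 h
  -- the sign character
  have hflip : ∀ (u : W) (i : Fin r),
      ((-1 : ℤˣ) ^ (Φp.filter fun β => -σ (u * s i) β ∈ Φp).card)
        = -((-1) ^ (Φp.filter fun β => -σ u β ∈ Φp).card) := by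
    intro u i
    have hcard := flipCard' Φp (fun μ => σ (s i) μ) (α i) (hαp i) (hΦpdisj (α i) (hαp i))
      (hσσ i) (hσα i) (fun β hβ hne => hperm i β hβ hne)
      (fun μ => -σ u μ ∈ Φp) (fun μ => -σ (u * s i) μ ∈ Φp)
      (fun β => by
        show -σ (u * s i) β ∈ Φp ↔ -σ u (σ (s i) β) ∈ Φp
        rw [hσmul]) ?_
    · set a := (Φp.filter fun β => -σ (u * s i) β ∈ Φp).card
      set b := (Φp.filter fun β => -σ u β ∈ Φp).card
      have hprod : (-1 : ℤˣ) ^ a * (-1) ^ b = -1 := by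
        rw [← pow_add, hcard, pow_succ, pow_mul]
        norm_num
      have hsq : (-1 : ℤˣ) ^ b * (-1) ^ b = 1 := by
        rw [← pow_add, ← two_mul, pow_mul]
        norm_num
      calc (-1 : ℤˣ) ^ a = (-1) ^ a * ((-1) ^ b * (-1) ^ b) := by rw [hsq, mul_one]
        _ = ((-1) ^ a * (-1) ^ b) * (-1) ^ b := (mul_assoc _ _ _).symm
        _ = -(-1) ^ b := by rw [hprod, neg_one_mul]
    · show -σ u (σ (s i) (α i)) ∈ Φp ↔ ¬(-σ u (α i) ∈ Φp)
      rw [hσα i, map_neg, neg_neg]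
      exact hexcl _ (hΦW u _ (hΦpΦ _ (hαp i)))
  have hpar : ∀ l : List (Fin r),
      ((-1 : ℤˣ) ^ (Φp.filter fun β => -σ ((l.map s).prod) β ∈ Φp).card) = (-1) ^ l.length := by
    intro l
    induction l using List.reverseRecOn with
    | nil =>
        have he : (Φp.filter fun β => -σ (([] : List (Fin r)).map s).prod β ∈ Φp) = ∅ := by
          apply Finset.filter_false_of_mem
          intro β hβ
          simp only [List.map_nil, List.prod_nil, map_one, LinearEquiv.coe_one, id_eq]
          exact hΦpdisj β hβ
        rw [he]
        simp
    | append_singleton l i ih =>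
        have hp : ((l ++ [i]).map s).prod = (l.map s).prod * s i := by
          rw [List.map_append, List.prod_append]
          simp
        rw [hp, hflip, ih, List.length_append]
        simp [pow_succ]
  -- existence of words
  have hword : ∀ w : W, ∃ l : List (Fin r), (l.map s).prod = w := by
    intro w
    have hw : w ∈ Subgroup.closure (Set.range s) := by rw [hgen]; exact Subgroup.mem_top w
    induction hw using Subgroup.closure_induction with
    | mem z hz =>
        obtain ⟨i, rfl⟩ := hz
        exact ⟨[i], by simp⟩
    | one => exact ⟨[], by simp⟩
    | mul z y _ _ ihz ihy =>
        obtain ⟨l1, h1⟩ := ihz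
        obtain ⟨l2, h2⟩ := ihy
        exact ⟨l1 ++ l2, by rw [List.map_append, List.prod_append, h1, h2]⟩
    | inv z _ ihz =>
        obtain ⟨l, h⟩ := ihz
        exact ⟨l.reverse, by rw [revWord' s hs2 l, h]⟩
  have hex : ∀ w : W, ∃ nl : ℕ, ∃ l : List (Fin r), (l.map s).prod = w ∧ l.length = nl :=
    fun w => (hword w).elim fun l hl => ⟨l.length, l, hl, rfl⟩
  obtain ⟨len, hlen_spec, hlen_min⟩ :
      ∃ len : W → ℕ, (∀ w : W, ∃ l : List (Fin r), (l.map s).prod = w ∧ l.length = len w) ∧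
        (∀ (w : W) (l : List (Fin r)), (l.map s).prod = w → len w ≤ l.length) :=
    ⟨fun w => Nat.find (hex w), fun w => Nat.find_spec (hex w),
      fun w l hl => Nat.find_min' (hex w) ⟨l, hl, rfl⟩⟩
  have hεlen : ∀ w : W,
      ((-1 : ℤˣ) ^ (Φp.filter fun β => -σ w β ∈ Φp).card) = (-1) ^ len w := by
    intro w
    obtain ⟨l, hl, hll⟩ := hlen_spec w
    rw [← hll, ← hl, hpar]
  have hne : ∀ (i : Fin r) (w : W), len (s i * w) ≠ len w := by
    intro i w h
    obtain ⟨l, hl, hll⟩ := hlen_spec w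
    have hp : ((i :: l).map s).prod = s i * w := by rw [List.map_cons, List.prod_cons, hl]
    have h1 : ((-1 : ℤˣ) ^ (Φp.filter fun β => -σ (s i * w) β ∈ Φp).card) = (-1) ^ (len w + 1) := by
      rw [← hp, hpar, List.length_cons, hll]
    rw [hεlen (s i * w), h, pow_succ] at h1
    have h2 : (-1 : ℤˣ) ^ len w * 1 = (-1) ^ len w * (-1) := by rw [mul_one]; exact h1
    have h3 := mul_left_cancel h2
    have h4 := congrArg Units.val h3
    norm_num at h4
  have hdich : ∀ (i : Fin r) (w : W), len (s i * w) = len w + 1 ∨ len w = len (s i * w) + 1 := by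
    intro i w
    have le1 : len (s i * w) ≤ len w + 1 := by
      obtain ⟨l, hl, hll⟩ := hlen_spec w
      have hp : ((i :: l).map s).prod = s i * w := by rw [List.map_cons, List.prod_cons, hl]
      have h2 := hlen_min (s i * w) (i :: l) hp
      rw [List.length_cons, hll] at h2
      exact h2
    have le2 : len w ≤ len (s i * w) + 1 := by
      obtain ⟨l, hl, hll⟩ := hlen_spec (s i * w)
      have hp : ((i :: l).map s).prod = w := by
        rw [List.map_cons, List.prod_cons, hl, ← mul_assoc, hs2 i, one_mul]
      have h2 := hlen_min w (i :: l) hp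
      rw [List.length_cons, hll] at h2
      exact h2
    have h3 := hne i w
    omega
  have hTstep : ∀ (i : Fin r) (w : W), len (s i * w) = len w + 1 →
      Tw (s i * w) = demWhitC ζ τ s α v i * Tw w := by
    intro i w hlw
    obtain ⟨l, hl, hll⟩ := hlen_spec w
    have hmin : ∀ l' : List (Fin r), (l'.map s).prod = w → l.length ≤ l'.length := by
      intro l' h'
      rw [hll]
      exact hlen_min w l' h'
    have hTww := hTw w l hl hmin
    have hp : ((i :: l).map s).prod = s i * w := by rw [List.map_cons, List.prod_cons, hl]
    have hmin2 : ∀ l' : List (Fin r), (l'.map s).prod = s i * w → (i :: l).length ≤ l'.length := by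
      intro l' h'
      have h2 := hlen_min (s i * w) l' h'
      rw [List.length_cons, hll]
      omega
    have h3 := hTw (s i * w) (i :: l) hp hmin2
    rw [h3, List.map_cons, List.prod_cons, ← hTww]
  -- part 1
  have main1 : ∀ (i : Fin r) (f : K),
      τ (s i) ((∑ w : W, Tw w) f) =
        ((1 - V * ζ (α i)) / (1 - V * ζ (-α i))) * ((∑ w : W, Tw w) f) := by
    intro i f
    have hxy : ζ (α i) * ζ (-α i) = 1 := by
      rw [← hζadd]
      simp [hζ0]
    have hx1 : ζ (α i) - 1 ≠ 0 := hζne1 _ (hα0 i)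
    have hy1 : ζ (-α i) - 1 ≠ 0 := hζne1 _ (neg_ne_zero.mpr (hα0 i))
    have hvx : 1 - V * ζ (α i) ≠ 0 := hunit _ (hα0 i)
    have hvy : 1 - V * ζ (-α i) ≠ 0 := hunit _ (neg_ne_zero.mpr (hα0 i))
    set gA : K := (∑ w ∈ Finset.univ.filter fun w => len (s i * w) = len w + 1, Tw w) f
      with hgA
    set G : K := τ (s i) gA with hG
    have hτx : τ (s i) (ζ (α i)) = ζ (-α i) := by rw [hτ, hσα i]
    have hτy : τ (s i) (ζ (-α i)) = ζ (α i) := by rw [hτ, map_neg, hσα i, neg_neg]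
    have hτV : τ (s i) V = V := by rw [hV]; exact AlgEquiv.commutes _ _
    have hτG : τ (s i) G = gA := by rw [hG]; exact hττ i gA
    have hTi : ∀ h : K, demWhitC ζ τ s α v i h
        = ((1 - V) / (ζ (α i) - 1)) * h + ((V * ζ (-α i) - 1) / (ζ (α i) - 1)) * τ (s i) h :=
      fun h => rfl
    have hdec : (∑ w : W, Tw w) f
        = gA + (((1 - V) / (ζ (α i) - 1)) * gA + ((V * ζ (-α i) - 1) / (ζ (α i) - 1)) * G) := by
      calc (∑ w : W, Tw w) f = ∑ w : W, Tw w f := LinearMap.sum_apply _ _ _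
        _ = (∑ w ∈ Finset.univ.filter fun w => len (s i * w) = len w + 1, Tw w f)
            + ∑ w ∈ Finset.univ.filter fun w => ¬(len (s i * w) = len w + 1), Tw w f :=
          (Finset.sum_filter_add_sum_filter_not _ _ _).symm
        _ = (∑ w ∈ Finset.univ.filter fun w => len (s i * w) = len w + 1, Tw w f)
            + ∑ w ∈ Finset.univ.filter fun w => len (s i * w) = len w + 1, Tw (s i * w) f := by
          congr 1
          apply Finset.sum_nbij' (fun w => s i * w) (fun w => s i * w)
          · intro a ha
            rw [Finset.mem_filter] at ha ⊢
            refine ⟨Finset.mem_univ _, ?_⟩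
            have hd := hdich i a
            have hr : s i * (s i * a) = a := by rw [← mul_assoc, hs2 i, one_mul]
            rw [hr]
            omega
          · intro a ha
            rw [Finset.mem_filter] at ha ⊢
            refine ⟨Finset.mem_univ _, ?_⟩
            have hr : s i * (s i * a) = a := by rw [← mul_assoc, hs2 i, one_mul]
            rw [hr]
            omega
          · intro a _
            rw [← mul_assoc, hs2 i, one_mul]
          · intro a _
            rw [← mul_assoc, hs2 i, one_mul]
          · intro a _
            have hr : s i * (s i * a) = a := by rw [← mul_assoc, hs2 i, one_mul]
            rw [hr]
        _ = gA + ∑ w ∈ Finset.univ.filter fun w => len (s i * w) = len w + 1,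
              demWhitC ζ τ s α v i (Tw w f) := by
          rw [hgA, LinearMap.sum_apply]
          congr 1
          apply Finset.sum_congr rfl
          intro w hw
          rw [hTstep i w (Finset.mem_filter.mp hw).2, Module.End.mul_apply]
        _ = gA + demWhitC ζ τ s α v i gA := by
          rw [hgA, LinearMap.sum_apply, map_sum]
        _ = gA + (((1 - V) / (ζ (α i) - 1)) * gA
              + ((V * ζ (-α i) - 1) / (ζ (α i) - 1)) * G) := by rw [hTi, hG]
    rw [hdec]
    simp only [map_add, map_mul, map_div₀, map_sub, map_one, hτx, hτy, hτV, hτG, ← hG]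
    linear_combination coreId' (ζ (α i)) (ζ (-α i)) V gA G hxy hx1 hy1 hvy
  refine ⟨main1, ?_⟩
  -- part 2
  have hβ0 : ∀ β ∈ Φp, β ≠ (0 : Λ) := by
    intro β hβ h
    apply hΦpdisj β hβ
    rw [h, neg_zero, ← h]
    exact hβ
  have hDfac : ∀ i : Fin r,
      τ (s i) (∏ β ∈ Φp, (1 - V * ζ (-β)))
        = ((1 - V * ζ (α i)) / (1 - V * ζ (-α i))) * ∏ β ∈ Φp, (1 - V * ζ (-β)) := by
    intro i
    have hvy : 1 - V * ζ (-α i) ≠ 0 := hunit _ (neg_ne_zero.mpr (hα0 i))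
    have h1 : τ (s i) (∏ β ∈ Φp, (1 - V * ζ (-β))) = ∏ β ∈ Φp, (1 - V * ζ (-σ (s i) β)) := by
      rw [map_prod]
      apply Finset.prod_congr rfl
      intro β _
      rw [map_sub, map_one, map_mul, hτ, map_neg]
      rw [hV]
      rw [AlgEquiv.commutes]
    have h2 : ∏ β ∈ Φp, (1 - V * ζ (-σ (s i) β))
        = (1 - V * ζ (α i)) * ∏ β ∈ Φp.erase (α i), (1 - V * ζ (-σ (s i) β)) := by
      rw [← Finset.mul_prod_erase Φp _ (hαp i), hσα i, neg_neg]
    have h3 : ∏ β ∈ Φp.erase (α i), (1 - V * ζ (-σ (s i) β))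
        = ∏ β ∈ Φp.erase (α i), (1 - V * ζ (-β)) := by
      apply Finset.prod_nbij' (fun β => σ (s i) β) (fun β => σ (s i) β)
      · intro a ha
        rw [Finset.mem_erase] at ha ⊢
        refine ⟨fun h => ?_, hperm i a ha.2 ha.1⟩
        have hb : a = -α i := by rw [← hσσ i a, h, hσα i]
        rw [hb] at ha
        exact hΦpdisj _ (hαp i) ha.2
      · intro a ha
        rw [Finset.mem_erase] at ha ⊢
        refine ⟨fun h => ?_, hperm i a ha.2 ha.1⟩
        have hb : a = -α i := by rw [← hσσ i a, h, hσα i]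
        rw [hb] at ha
        exact hΦpdisj _ (hαp i) ha.2
      · intro a _; exact hσσ i a
      · intro a _; exact hσσ i a
      · intro a _
        rfl
    have h4 : ∏ β ∈ Φp, (1 - V * ζ (-β))
        = (1 - V * ζ (-α i)) * ∏ β ∈ Φp.erase (α i), (1 - V * ζ (-β)) :=
      (Finset.mul_prod_erase Φp _ (hαp i)).symm
    rw [h1, h2, h3, h4]
    field_simp
  intro w f
  have hw : w ∈ Subgroup.closure (Set.range s) := by rw [hgen]; exact Subgroup.mem_top w
  induction hw using Subgroup.closure_induction with
  | mem z hz =>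
      obtain ⟨i, rfl⟩ := hz
      rw [map_mul, map_inv₀, main1 i f, hDfac i, mul_inv, mul_mul_mul_comm,
        inv_mul_cancel₀ (div_ne_zero (hunit _ (hα0 i)) (hunit _ (neg_ne_zero.mpr (hα0 i)))),
        one_mul]
  | one =>
      rw [map_one]
      rfl
  | mul z y _ _ ihz ihy =>
      rw [map_mul τ z y, AlgEquiv.mul_apply, ihy, ihz]
  | inv z _ ihz =>
      conv_lhs => rw [← ihz]
      rw [← AlgEquiv.mul_apply, ← map_mul, inv_mul_cancel, map_one]
      rfl
end
end

section
/- Triangularity of the twisted affine R-matrix: (1) for every x ∈ ℂˣ, (τ∘R^γ(x)) ∘ (τ∘R^γ(x⁻¹)) = (q − x q⁻¹)(q − x⁻¹ q⁻¹)·id_{V⊗V}; (2) in the limit x → 0 one recovers the finite R-matrix: R^γ(0) = R^γ. (Proposition 4.3 of 'Hecke Modules from Metaplectic Ice'.) -/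
/-!
Proposition 4.3 of "Hecke Modules from Metaplectic Ice": triangularity of the twisted
affine R-matrix `R^γ(x)`, and the limit `R^γ(0) = R^γ`.  Endomorphisms of `V ⊗ V`
(`V = ℂⁿ`) are written as matrices over `Fin n × Fin n` (composition = matrix product).
-/

open scoped Kronecker

noncomputable section

/-- The matrix unit `e_{ij} ∈ End(ℂⁿ)`. -/
def matE (n : ℕ) (i j : Fin n) : Matrix (Fin n) (Fin n) ℂ := Matrix.single i j 1

/-- The flip `τ : V ⊗ V → V ⊗ V`, `x ⊗ y ↦ y ⊗ x`, as a matrix. -/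
def tauMat (n : ℕ) : Matrix (Fin n × Fin n) (Fin n × Fin n) ℂ :=
  fun p q => if p.1 = q.2 ∧ p.2 = q.1 then 1 else 0

/-- The multiparameter R-matrix `R^γ`. -/
def Rgamma (n : ℕ) (q : ℂ) (γ : Fin n → Fin n → ℂ) :
    Matrix (Fin n × Fin n) (Fin n × Fin n) ℂ :=
  (∑ i : Fin n, q • (matE n i i ⊗ₖ matE n i i))
  + (∑ i : Fin n, ∑ j : Fin n, if i < j then (γ i j)⁻¹ • (matE n i i ⊗ₖ matE n j j) else 0)
  + (∑ i : Fin n, ∑ j : Fin n, if j < i then (γ j i) • (matE n i i ⊗ₖ matE n j j) else 0)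
  + (q - q⁻¹) • ∑ i : Fin n, ∑ j : Fin n, if j < i then matE n i j ⊗ₖ matE n j i else 0

/-- The twisted affine R-matrix `R^γ(x)`. -/
def RgammaAff (n : ℕ) (q : ℂ) (γ : Fin n → Fin n → ℂ) (x : ℂ) :
    Matrix (Fin n × Fin n) (Fin n × Fin n) ℂ :=
  (∑ i : Fin n, (q - x * q⁻¹) • (matE n i i ⊗ₖ matE n i i))
  + (∑ i : Fin n, ∑ j : Fin n,
      if i < j then ((γ i j)⁻¹ * (1 - x)) • (matE n i i ⊗ₖ matE n j j) else 0)
  + (∑ i : Fin n, ∑ j : Fin n,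
      if j < i then (γ j i * (1 - x)) • (matE n i i ⊗ₖ matE n j j) else 0)
  + (q - q⁻¹) • (∑ i : Fin n, ∑ j : Fin n, if j < i then matE n i j ⊗ₖ matE n j i else 0)
  + (x * (q - q⁻¹)) •
      ∑ i : Fin n, ∑ j : Fin n, if i < j then matE n i j ⊗ₖ matE n j i else 0

lemma dsum_eq {n : ℕ} (f : Fin n → Fin n → ℂ) (a b : Fin n)
    (h : ∀ i j, i ≠ a ∨ j ≠ b → f i j = 0) : ∑ i, ∑ j, f i j = f a b := by
  rw [Finset.sum_eq_single a]
  · rw [Finset.sum_eq_single b]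
    · intro j _ hj; exact h a j (Or.inr hj)
    · simp
  · intro i _ hi; exact Finset.sum_eq_zero fun j _ => h i j (Or.inl hi)
  · simp

lemma dsum_eq2 {n : ℕ} (f : Fin n → Fin n → ℂ) (a b : Fin n) (hab : a ≠ b)
    (h : ∀ i j, ¬(i = a ∧ j = b) → ¬(i = b ∧ j = a) → f i j = 0) :
    ∑ i, ∑ j, f i j = f a b + f b a := by
  have key : ∀ i j, f i j =
      (if i = a ∧ j = b then f a b else 0) + (if i = b ∧ j = a then f b a else 0) := by
    intro i j
    by_cases h1 : i = a ∧ j = b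
    · obtain ⟨rfl, rfl⟩ := h1; simp [hab, Ne.symm hab]
    · by_cases h2 : i = b ∧ j = a
      · obtain ⟨rfl, rfl⟩ := h2; simp [hab, Ne.symm hab]
      · simp [h1, h2, h i j h1 h2]
  calc ∑ i, ∑ j, f i j
      = ∑ i, ∑ j, ((if i = a ∧ j = b then f a b else 0)
          + (if i = b ∧ j = a then f b a else 0)) :=
        Finset.sum_congr rfl fun i _ => Finset.sum_congr rfl fun j _ => key i j
    _ = (∑ i, ∑ j, (if i = a ∧ j = b then f a b else 0))
          + (∑ i, ∑ j, (if i = b ∧ j = a then f b a else 0)) := by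
        simp [Finset.sum_add_distrib]
    _ = f a b + f b a := by
        rw [dsum_eq _ a b (by intro i j hij; rcases hij with h' | h' <;> simp [h']),
            dsum_eq _ b a (by intro i j hij; rcases hij with h' | h' <;> simp [h'])]
        simp

set_option maxHeartbeats 1600000 in
lemma RgammaAff_apply (n : ℕ) (q : ℂ) (γ : Fin n → Fin n → ℂ) (x : ℂ) (a b c d : Fin n) :
    RgammaAff n q γ x (a,b) (c,d) =
    (if a = c ∧ b = d then
        (if a = b then q - x*q⁻¹ else if a < b then (γ a b)⁻¹*(1-x) else γ b a*(1-x)) else 0)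
    + (if a = d ∧ b = c ∧ a ≠ b then (if b < a then q - q⁻¹ else x*(q-q⁻¹)) else 0) := by
  simp only [RgammaAff, Matrix.add_apply, Matrix.sum_apply, Matrix.smul_apply,
    Matrix.kroneckerMap_apply, matE, Matrix.single, Matrix.of_apply,
    apply_ite (fun M : Matrix (Fin n × Fin n) (Fin n × Fin n) ℂ => M (a,b) (c,d)),
    Matrix.zero_apply, smul_eq_mul]
  simp only [mul_ite, mul_one, mul_zero, ite_and, Finset.sum_ite_eq, Finset.sum_ite_eq',
    Finset.mem_univ, if_true]
  rw [dsum_eq _ a b (by intro i j h; rcases h with h | h <;> split_ifs <;> simp_all),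
      dsum_eq _ a b (by intro i j h; rcases h with h | h <;> split_ifs <;> simp_all),
      dsum_eq _ a b (by intro i j h; rcases h with h | h <;> split_ifs <;> simp_all),
      dsum_eq _ a b (by intro i j h; rcases h with h | h <;> split_ifs <;> simp_all)]
  split_ifs <;>
    first
      | ring1
      | (exfalso; simp only [Fin.lt_def, ne_eq, Fin.ext_iff, not_and, not_lt] at *;
          first | omega | simp_all)

lemma tau_mul {n : ℕ} (M : Matrix (Fin n × Fin n) (Fin n × Fin n) ℂ) :
    tauMat n * M = Matrix.of fun p r => M (p.2, p.1) r := by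
  ext ⟨a, b⟩ r
  rw [Matrix.mul_apply, Fintype.sum_prod_type]
  rw [dsum_eq (fun i j => tauMat n (a,b) (i,j) * M (i,j) r) b a
      (by intro i j hij; rcases hij with h' | h' <;> simp [tauMat, h', Ne.symm h'])]
  simp [tauMat]

set_option maxHeartbeats 1600000 in
lemma part1_entry (n : ℕ) (q : ℂ) (hq : q ≠ 0)
    (γ : Fin n → Fin n → ℂ) (hγ : ∀ i j : Fin n, i < j → γ i j ≠ 0)
    (x : ℂ) (hx : x ≠ 0) (a b c d : Fin n) :
    ∑ i, ∑ j, RgammaAff n q γ x (b,a) (i,j) * RgammaAff n q γ x⁻¹ (j,i) (c,d)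
      = if a = c ∧ b = d then (q - x * q⁻¹) * (q - x⁻¹ * q⁻¹) else 0 := by
  rcases eq_or_ne a b with rfl | hab
  · rw [dsum_eq (fun i j => RgammaAff n q γ x (a,a) (i,j)
          * RgammaAff n q γ x⁻¹ (j,i) (c,d)) a a
        (by intro i j hij
            have e1 : ¬(a = i ∧ a = j) := by
              rcases hij with h' | h' <;> exact fun u => h' (by simp [← u.1, ← u.2])
            have e2 : ¬(a = j ∧ a = i ∧ a ≠ a) := fun u => u.2.2 rfl
            have : RgammaAff n q γ x (a,a) (i,j) = 0 := by
              rw [RgammaAff_apply, if_neg e1, if_neg e2, add_zero]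
            simp [this])]
    rw [RgammaAff_apply, RgammaAff_apply]
    split_ifs <;> simp_all <;> ring
  · rw [dsum_eq2 (fun i j => RgammaAff n q γ x (b,a) (i,j)
          * RgammaAff n q γ x⁻¹ (j,i) (c,d)) b a (Ne.symm hab)
        (by intro i j h1 h2
            have e1 : ¬(b = i ∧ a = j) := fun u => h1 ⟨u.1.symm, u.2.symm⟩
            have e2 : ¬(b = j ∧ a = i ∧ b ≠ a) := fun u => h2 ⟨u.2.1.symm, u.1.symm⟩
            have : RgammaAff n q γ x (b,a) (i,j) = 0 := by
              rw [RgammaAff_apply, if_neg e1, if_neg e2, add_zero]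
            simp [this])]
    simp only [RgammaAff_apply]
    rcases lt_trichotomy a b with h | h | h
    · have hg : γ a b ≠ 0 := hγ a b h
      have hba : ¬ b < a := not_lt.2 h.le
      have hne : b ≠ a := Ne.symm hab
      simp only [h, hab, hne, hba, lt_irrefl, ne_eq, not_false_eq_true, eq_self_iff_true,
        if_true, if_false, true_and, and_true, not_true, false_and, and_false]
      split_ifs <;>
        first
          | ring1
          | (field_simp; ring1)
          | (exfalso; simp only [Fin.lt_def, ne_eq, Fin.ext_iff, not_and, not_lt] at *;
              first | omega | (simp_all; done))
    · exact absurd h hab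
    · have hg : γ b a ≠ 0 := hγ b a h
      have hba : ¬ a < b := not_lt.2 h.le
      have hne : b ≠ a := Ne.symm hab
      simp only [h, hab, hne, hba, lt_irrefl, ne_eq, not_false_eq_true, eq_self_iff_true,
        if_true, if_false, true_and, and_true, not_true, false_and, and_false]
      split_ifs <;>
        first
          | ring1
          | (field_simp; ring1)
          | (exfalso; simp only [Fin.lt_def, ne_eq, Fin.ext_iff, not_and, not_lt] at *;
              first | omega | (simp_all; done))

/-- **Proposition 4.3 of "Hecke Modules from Metaplectic Ice".**
(1) `(τ∘R^γ(x)) ∘ (τ∘R^γ(x⁻¹)) = (q − x q⁻¹)(q − x⁻¹ q⁻¹)·id` for every `x ∈ ℂˣ`;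
(2) in the limit `x → 0` one recovers the finite R-matrix: `R^γ(0) = R^γ`. -/
theorem RgammaAff_triangularity (n : ℕ) (hn : 1 ≤ n) (q : ℂ) (hq : q ≠ 0)
    (v : ℂ) (hv : v = q ^ 2)
    (γ : Fin n → Fin n → ℂ) (hγ : ∀ i j : Fin n, i < j → γ i j ≠ 0) :
    (∀ x : ℂ, x ≠ 0 →
      (tauMat n * RgammaAff n q γ x) * (tauMat n * RgammaAff n q γ x⁻¹) =
        ((q - x * q⁻¹) * (q - x⁻¹ * q⁻¹)) • 1)
    ∧ RgammaAff n q γ 0 = Rgamma n q γ := by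
  constructor
  · intro x hx
    ext ⟨a, b⟩ ⟨c, d⟩
    rw [tau_mul, tau_mul, Matrix.mul_apply, Fintype.sum_prod_type]
    simp only [Matrix.of_apply]
    have hrhs : (((q - x * q⁻¹) * (q - x⁻¹ * q⁻¹)) •
        (1 : Matrix (Fin n × Fin n) (Fin n × Fin n) ℂ)) (a,b) (c,d)
        = if a = c ∧ b = d then (q - x * q⁻¹) * (q - x⁻¹ * q⁻¹) else 0 := by
      simp [Matrix.one_apply, Prod.ext_iff, ite_and]
    rw [hrhs]
    exact part1_entry n q hq γ hγ x hx a b c d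
  · simp only [RgammaAff, Rgamma, zero_mul, mul_zero, sub_zero, mul_one, zero_smul, add_zero]
end
end
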